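/- There is no finitely additive S_ℕ-invariant probability measure on the space Part(2) of partitions of ℕ into blocks of size exactly 2. Equivalently (key combinatorial step): for any perfect matching a on ℕ (symmetric 0-1 matrix a_{ij} with exactly one 1 in each row, zero diagonal), the Cesàro averages (1/n!) Σ_{g ∈ S_n} a_{g(i), g(j)} tend to 0 as n → ∞, for every fixed pair i ≠ j. -/

import Mathlib

/-- Extension of a permutation of `Fin n` to `ℕ`, fixing all points `≥ n`. -/
def extPerm (n : ℕ) (g : Equiv.Perm (Fin n)) (x : ℕ) : ℕ :=
  if h : x < n then (g ⟨x, h⟩ : ℕ) else x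

/-- Each row sum of a perfect matching over any finite set of columns is at most 1. -/
lemma rowsum_le_one (a : ℕ → ℕ → ℝ)
    (h01 : ∀ i j, a i j = 0 ∨ a i j = 1)
    (hmatch : ∀ i, ∃! j, a i j = 1)
    (x : ℕ) (s : Finset ℕ) : ∑ y ∈ s, a x y ≤ 1 := by
  obtain ⟨y₀, _, huniq⟩ := hmatch x
  calc ∑ y ∈ s, a x y ≤ ∑ y ∈ s, (if y = y₀ then (1:ℝ) else 0) := by
        apply Finset.sum_le_sum
        intro y _
        by_cases h : y = y₀
        · simp only [h, if_pos rfl]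
          rcases h01 x y with h' | h' <;> rw [h] at h' <;> simp [h']
        · simp only [if_neg h]
          rcases h01 x y with h' | h'
          · exact le_of_eq h'
          · exact absurd (huniq y h') h
    _ = if y₀ ∈ s then 1 else 0 := Finset.sum_ite_eq' s y₀ (fun _ => (1:ℝ))
    _ ≤ 1 := by split <;> norm_num

/-- Key counting inequality. -/
lemma key_ineq (a : ℕ → ℕ → ℝ)
    (h01 : ∀ i j, a i j = 0 ∨ a i j = 1)
    (hmatch : ∀ i, ∃! j, a i j = 1)
    (n : ℕ) (i' j' : Fin n) (hij : i' ≠ j') :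
    ((n : ℝ) - 1) * (∑ g : Equiv.Perm (Fin n), a (g i') (g j')) ≤ Nat.factorial n := by
  have hn1 : 1 ≤ n := Nat.one_le_iff_ne_zero.mpr (by rintro rfl; exact i'.elim0)
  set S : ℝ := ∑ g : Equiv.Perm (Fin n), a (g i') (g j') with hS
  have hswap : ∀ k ∈ Finset.univ.erase i',
      S = ∑ g : Equiv.Perm (Fin n), a (g i') (g k) := by
    intro k hk
    have hki : k ≠ i' := (Finset.mem_erase.mp hk).1
    rw [hS, ← Equiv.sum_comp (Equiv.mulRight (Equiv.swap j' k))
      (fun g : Equiv.Perm (Fin n) => a (g i') (g j'))]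
    apply Finset.sum_congr rfl
    intro g _
    simp only [Equiv.coe_mulRight, Equiv.Perm.mul_apply]
    rw [Equiv.swap_apply_of_ne_of_ne hij hki.symm, Equiv.swap_apply_left]
  have hcard : ((Finset.univ.erase i').card : ℝ) = (n : ℝ) - 1 := by
    rw [Finset.card_erase_of_mem (Finset.mem_univ i'), Finset.card_univ, Fintype.card_fin,
      Nat.cast_sub hn1, Nat.cast_one]
  calc ((n : ℝ) - 1) * S = ∑ k ∈ Finset.univ.erase i', S := by
        rw [Finset.sum_const, nsmul_eq_mul, hcard]
    _ = ∑ k ∈ Finset.univ.erase i', ∑ g : Equiv.Perm (Fin n), a (g i') (g k) :=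
        Finset.sum_congr rfl hswap
    _ = ∑ g : Equiv.Perm (Fin n), ∑ k ∈ Finset.univ.erase i', a (g i') (g k) :=
        Finset.sum_comm
    _ ≤ ∑ _g : Equiv.Perm (Fin n), (1 : ℝ) := by
        apply Finset.sum_le_sum
        intro g _
        have hinj : Function.Injective (fun k : Fin n => ((g k : ℕ))) := by
          intro x y h
          exact g.injective (Fin.val_injective h)
        have hb := rowsum_le_one a h01 hmatch (g i')
          ((Finset.univ.erase i').image (fun k : Fin n => ((g k : ℕ))))
        rwa [Finset.sum_image (fun x _ y _ h => hinj h)] at hb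
    _ = Nat.factorial n := by
        rw [Finset.sum_const, Finset.card_univ, nsmul_eq_mul, mul_one]
        norm_cast
        exact Fintype.card_perm.trans (by rw [Fintype.card_fin])

theorem stmt15 (a : ℕ → ℕ → ℝ)
    (hsymm : ∀ i j, a i j = a j i)
    (hdiag : ∀ i, a i i = 0)
    (h01 : ∀ i j, a i j = 0 ∨ a i j = 1)
    (hmatch : ∀ i, ∃! j, a i j = 1)
    (i j : ℕ) (hij : i ≠ j) :
    Filter.Tendsto
      (fun n => (∑ g : Equiv.Perm (Fin n), a (extPerm n g i) (extPerm n g j)) /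
        (Nat.factorial n : ℝ))
      Filter.atTop (nhds 0) := by
  have hnonneg : ∀ x y, 0 ≤ a x y := by
    intro x y; rcases h01 x y with h | h <;> simp [h]
  apply tendsto_of_tendsto_of_tendsto_of_le_of_le'
    (g := fun _ : ℕ => (0 : ℝ)) (h := fun n : ℕ => 1 / ((n : ℝ) - 1))
  · exact tendsto_const_nhds
  · have h1 : Filter.Tendsto (fun n : ℕ => ((n : ℝ) - 1)) Filter.atTop Filter.atTop := by
      have h0 := Filter.tendsto_atTop_add_const_right Filter.atTop (-1 : ℝ)
        tendsto_natCast_atTop_atTop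
      simpa [sub_eq_add_neg] using h0
    simpa [one_div, Pi.inv_def] using h1.inv_tendsto_atTop
  · filter_upwards with n
    apply div_nonneg _ (Nat.cast_nonneg _)
    exact Finset.sum_nonneg fun g _ => hnonneg _ _
  · filter_upwards [Filter.eventually_ge_atTop (max i j + 2)] with n hn
    have hi : i < n := lt_of_le_of_lt (le_max_left i j) (by omega)
    have hj : j < n := lt_of_le_of_lt (le_max_right i j) (by omega)
    have hn2 : 2 ≤ n := by omega
    have hne : (⟨i, hi⟩ : Fin n) ≠ ⟨j, hj⟩ := by
      simp [Fin.ext_iff, hij]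
    have hext : ∀ g : Equiv.Perm (Fin n),
        a (extPerm n g i) (extPerm n g j) = a (g ⟨i, hi⟩) (g ⟨j, hj⟩) := by
      intro g; simp [extPerm, hi, hj]
    have key := key_ineq a h01 hmatch n ⟨i, hi⟩ ⟨j, hj⟩ hne
    have hfac : (0 : ℝ) < (Nat.factorial n : ℝ) := by
      exact_mod_cast Nat.factorial_pos n
    have hn1 : (0 : ℝ) < (n : ℝ) - 1 := by
      have : (2 : ℝ) ≤ (n : ℝ) := by exact_mod_cast hn2
      linarith
    rw [div_le_div_iff₀ hfac hn1]
    calc (∑ g : Equiv.Perm (Fin n), a (extPerm n g i) (extPerm n g j)) * ((n : ℝ) - 1)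
        = ((n : ℝ) - 1) * (∑ g : Equiv.Perm (Fin n), a (g ⟨i, hi⟩) (g ⟨j, hj⟩)) := by
          rw [mul_comm]; congr 1; exact Finset.sum_congr rfl fun g _ => hext g
      _ ≤ Nat.factorial n := key
      _ = 1 * Nat.factorial n := (one_mul _).symm
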